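/- Let G=(V,E) be a directed graph on V=[p] containing all self-loops, and let C be a symmetric positive definite p×p matrix. Then the graphical continuous Lyapunov model M_{G,C} is globally identifiable if and only if for every Σ ∈ M_{G,C} the linear map from ℝ^E to the symmetric p×p matrices given by M ↦ MΣ + ΣM^⊤ is injective. -/

import Mathlib

open Matrix MeasureTheory

/-- A real square matrix is *stable* if every eigenvalue (over `ℂ`) has strictly
negative real part. -/
def IsStableMat {n : Type*} [Fintype n] [DecidableEq n] (M : Matrix n n ℝ) : Prop :=
  ∀ μ ∈ spectrum ℂ (M.map (algebraMap ℝ ℂ)), μ.re < 0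

/-- `M ∈ ℝ^E`: the matrix `M` is supported on the directed graph with edge set `E`,
i.e. `M j i = 0` whenever `(i, j) ∉ E`. -/
def InSupp {n : Type*} (E : Set (n × n)) (M : Matrix n n ℝ) : Prop :=
  ∀ i j : n, (i, j) ∉ E → M j i = 0

/-- The graphical continuous Lyapunov model `M_{G,C}`: positive definite matrices `S`
such that `M * S + S * Mᵀ + C = 0` for some `M ∈ ℝ^E`. -/
def LyapModel {n : Type*} [Fintype n] [DecidableEq n] (E : Set (n × n))
    (C : Matrix n n ℝ) : Set (Matrix n n ℝ) :=
  {S | S.PosDef ∧ ∃ M : Matrix n n ℝ, InSupp E M ∧ M * S + S * Mᵀ + C = 0}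

/-- Global identifiability: no two stable matrices supported on `E` yield the same
solution of the Lyapunov equation.  (Since for stable `M` the Lyapunov equation has a
unique positive definite solution `Σ(M,C)`, this is equivalent to every fiber
`F_{G,C}(M₀)` being the singleton `{M₀}`.) -/
def GloballyIdentifiable {n : Type*} [Fintype n] [DecidableEq n] (E : Set (n × n))
    (C : Matrix n n ℝ) : Prop :=
  ∀ M₁ M₂ : Matrix n n ℝ,
    InSupp E M₁ → IsStableMat M₁ → InSupp E M₂ → IsStableMat M₂ →
    ∀ S : Matrix n n ℝ, S.PosDef →
      M₁ * S + S * M₁ᵀ + C = 0 → M₂ * S + S * M₂ᵀ + C = 0 → M₁ = M₂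

/-- A directed graph is *simple* if it has no 2-cycles between distinct nodes. -/
def IsSimpleDigraph {n : Type*} (E : Set (n × n)) : Prop :=
  ∀ i j : n, i ≠ j → (i, j) ∈ E → (j, i) ∉ E

/-- The fiber `F_{G,C}(M₀)`: all stable matrices supported on `E` whose Lyapunov
solution coincides with that of `M₀`, i.e. some positive definite `S` solves the
Lyapunov equation for both `M₀` and `M`. -/
def Fiber {n : Type*} [Fintype n] [DecidableEq n] (E : Set (n × n))
    (C M₀ : Matrix n n ℝ) : Set (Matrix n n ℝ) :=
  {M | InSupp E M ∧ IsStableMat M ∧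
    ∃ S : Matrix n n ℝ, S.PosDef ∧ M₀ * S + S * M₀ᵀ + C = 0 ∧ M * S + S * Mᵀ + C = 0}

/-- The identification of the coordinate space `ℝ^{|E|}` with the matrices in `ℝ^E`:
the coordinate attached to an edge `(i,j)` is the entry `M j i`. -/
def edgeMatrix {p : ℕ} (E : Finset (Fin p × Fin p)) (f : E → ℝ) :
    Matrix (Fin p) (Fin p) ℝ :=
  fun j i => if h : (i, j) ∈ E then f ⟨(i, j), h⟩ else 0

/-- Generic identifiability: the set of parameter vectors `f ∈ ℝ^{|E|}` whose matrix
is stable but whose fiber is not a singleton is a Lebesgue null set. -/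
def GenericallyIdentifiable {p : ℕ} (E : Finset (Fin p × Fin p))
    (C : Matrix (Fin p) (Fin p) ℝ) : Prop :=
  volume {f : E → ℝ | IsStableMat (edgeMatrix E f) ∧
    Fiber (E : Set (Fin p × Fin p)) C (edgeMatrix E f) ≠ {edgeMatrix E f}} = 0


section Aux

private lemma re_quad_pos_aux {p : ℕ} {S : Matrix (Fin p) (Fin p) ℝ} (hS : S.PosDef)
    {w : Fin p → ℂ} (hw : w ≠ 0) :
    0 < (star w ⬝ᵥ (S.map (algebraMap ℝ ℂ)) *ᵥ w).re := by
  classical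
  set u : Fin p → ℝ := fun i => (w i).re with hu
  set v : Fin p → ℝ := fun i => (w i).im with hv
  have key : (star w ⬝ᵥ (S.map (algebraMap ℝ ℂ)) *ᵥ w).re
      = u ⬝ᵥ S *ᵥ u + v ⬝ᵥ S *ᵥ v := by
    simp only [dotProduct, Matrix.mulVec, Matrix.map_apply, Pi.star_apply]
    rw [Complex.re_sum, ← Finset.sum_add_distrib]
    refine Finset.sum_congr rfl fun i _ => ?_
    have hre : (∑ j, (algebraMap ℝ ℂ) (S i j) * w j).re = ∑ j, S i j * u j := by
      rw [Complex.re_sum]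
      exact Finset.sum_congr rfl fun j _ => by
        simp [Complex.coe_algebraMap, Complex.re_ofReal_mul, hu]
    have him : (∑ j, (algebraMap ℝ ℂ) (S i j) * w j).im = ∑ j, S i j * v j := by
      rw [Complex.im_sum]
      exact Finset.sum_congr rfl fun j _ => by
        simp [Complex.coe_algebraMap, Complex.im_ofReal_mul, hv]
    rw [Complex.mul_re, hre, him]
    have h1 : (star (w i)).re = u i := by simp [hu]
    have h2 : (star (w i)).im = - v i := by simp [hv]
    rw [h1, h2]
    ring
  rw [key]
  have h0 : u ≠ 0 ∨ v ≠ 0 := by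
    by_contra hcon
    push_neg at hcon
    apply hw
    funext i
    have h1 := congrFun hcon.1 i
    have h2 := congrFun hcon.2 i
    exact Complex.ext (by simpa [hu] using h1) (by simpa [hv] using h2)
  rcases h0 with h | h
  · have h1 := hS.dotProduct_mulVec_pos h
    have h2 := hS.posSemidef.dotProduct_mulVec_nonneg v
    simp only [star_trivial] at h1 h2
    linarith
  · have h1 := hS.posSemidef.dotProduct_mulVec_nonneg u
    have h2 := hS.dotProduct_mulVec_pos h
    simp only [star_trivial] at h1 h2
    linarith

private lemma stable_of_lyap_aux {p : ℕ} {M S C : Matrix (Fin p) (Fin p) ℝ}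
    (hS : S.PosDef) (hC : C.PosDef) (h : M * S + S * Mᵀ + C = 0) :
    IsStableMat M := by
  classical
  intro μ hμ
  set Mc : Matrix (Fin p) (Fin p) ℂ := M.map (algebraMap ℝ ℂ) with hMc
  set Sc : Matrix (Fin p) (Fin p) ℂ := S.map (algebraMap ℝ ℂ) with hSc
  set Cc : Matrix (Fin p) (Fin p) ℂ := C.map (algebraMap ℝ ℂ) with hCc
  have hdet : (μ • (1 : Matrix (Fin p) (Fin p) ℂ) - Mc).det = 0 := by
    rw [spectrum.mem_iff, Algebra.algebraMap_eq_smul_one] at hμ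
    by_contra hd
    exact hμ ((Matrix.isUnit_iff_isUnit_det _).mpr (isUnit_iff_ne_zero.mpr hd))
  have hdetT : (μ • (1 : Matrix (Fin p) (Fin p) ℂ) - Mcᵀ).det = 0 := by
    have : μ • (1 : Matrix (Fin p) (Fin p) ℂ) - Mcᵀ
        = (μ • (1 : Matrix (Fin p) (Fin p) ℂ) - Mc)ᵀ := by
      rw [Matrix.transpose_sub, Matrix.transpose_smul, Matrix.transpose_one]
    rw [this, Matrix.det_transpose]
    exact hdet
  obtain ⟨w, hw, hweq⟩ := Matrix.exists_mulVec_eq_zero_iff.mpr hdetT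
  have heig : Mcᵀ *ᵥ w = μ • w := by
    have := hweq
    rw [Matrix.sub_mulVec, Matrix.smul_mulVec, Matrix.one_mulVec, sub_eq_zero] at this
    exact this.symm
  have hc : Mc * Sc + Sc * Mcᵀ + Cc = 0 := by
    have h' := congrArg (fun A : Matrix (Fin p) (Fin p) ℝ => (algebraMap ℝ ℂ).mapMatrix A) h
    simp only [map_add, map_zero, RingHom.mapMatrix_apply, Matrix.map_mul,
      Matrix.transpose_map] at h'
    exact h'
  set q : ℂ := star w ⬝ᵥ Sc *ᵥ w with hq
  have h1 : star w ⬝ᵥ (Mc * Sc) *ᵥ w = (starRingEnd ℂ μ) * q := by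
    have hMcH : Mcᵀᴴ = Mc := by
      ext i j
      simp [Matrix.conjTranspose_apply, hMc, Matrix.map_apply]
    have hstar : star w ᵥ* Mc = (starRingEnd ℂ μ) • star w := by
      calc star w ᵥ* Mc = star w ᵥ* Mcᵀᴴ := by rw [hMcH]
        _ = star (Mcᵀ *ᵥ w) := (Matrix.star_mulVec _ _).symm
        _ = star (μ • w) := by rw [heig]
        _ = (starRingEnd ℂ μ) • star w := by rw [star_smul]; rfl
    rw [← Matrix.mulVec_mulVec, Matrix.dotProduct_mulVec, hstar, smul_dotProduct,
      smul_eq_mul]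
  have h2 : star w ⬝ᵥ (Sc * Mcᵀ) *ᵥ w = μ * q := by
    rw [← Matrix.mulVec_mulVec, heig, Matrix.mulVec_smul, dotProduct_smul, smul_eq_mul]
  have hsum : (starRingEnd ℂ μ + μ) * q = - (star w ⬝ᵥ Cc *ᵥ w) := by
    have hneg : Mc * Sc + Sc * Mcᵀ = -Cc := eq_neg_of_add_eq_zero_left hc
    calc (starRingEnd ℂ μ + μ) * q
        = star w ⬝ᵥ (Mc * Sc) *ᵥ w + star w ⬝ᵥ (Sc * Mcᵀ) *ᵥ w := by rw [h1, h2]; ring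
      _ = star w ⬝ᵥ (Mc * Sc + Sc * Mcᵀ) *ᵥ w := by
          rw [Matrix.add_mulVec, dotProduct_add]
      _ = - (star w ⬝ᵥ Cc *ᵥ w) := by
          rw [hneg, Matrix.neg_mulVec, dotProduct_neg]
  have hqpos : 0 < q.re := re_quad_pos_aux hS hw
  have hcpos : 0 < (star w ⬝ᵥ Cc *ᵥ w).re := re_quad_pos_aux hC hw
  have hre : (2 * μ.re) * q.re = - (star w ⬝ᵥ Cc *ᵥ w).re := by
    have hR := congrArg Complex.re hsum
    have hconj : starRingEnd ℂ μ + μ = ((2 * μ.re : ℝ) : ℂ) := by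
      rw [add_comm]; exact Complex.add_conj μ
    rw [hconj] at hR
    simpa [Complex.re_ofReal_mul, Complex.neg_re] using hR
  nlinarith

end Aux

/-- the model is globally identifiable iff for every `Σ` in the model,
the linear map `M ↦ M Σ + Σ Mᵀ` is injective on `ℝ^E`. -/
theorem globally_identifiable_iff_injective {p : ℕ}
    (E : Set (Fin p × Fin p)) (hloops : ∀ i : Fin p, (i, i) ∈ E)
    (C : Matrix (Fin p) (Fin p) ℝ) (hC : C.PosDef) :
    GloballyIdentifiable E C ↔
      ∀ S ∈ LyapModel E C, ∀ M₁ M₂ : Matrix (Fin p) (Fin p) ℝ,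
        InSupp E M₁ → InSupp E M₂ →
        M₁ * S + S * M₁ᵀ = M₂ * S + S * M₂ᵀ → M₁ = M₂ := by
  constructor
  · intro hGI S hSmem M₁ M₂ h₁ h₂ heq
    obtain ⟨hSpd, M₀, hM₀supp, hM₀eq⟩ := hSmem
    have hD : (M₁ - M₂) * S + S * (M₁ - M₂)ᵀ = 0 := by
      have h0 : M₁ * S + S * M₁ᵀ - (M₂ * S + S * M₂ᵀ) = 0 := sub_eq_zero.mpr heq
      calc (M₁ - M₂) * S + S * (M₁ - M₂)ᵀ
          = M₁ * S + S * M₁ᵀ - (M₂ * S + S * M₂ᵀ) := by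
            rw [Matrix.transpose_sub, Matrix.sub_mul, Matrix.mul_sub]; abel
        _ = 0 := h0
    have hM₁' : (M₀ + (M₁ - M₂)) * S + S * (M₀ + (M₁ - M₂))ᵀ + C = 0 := by
      calc (M₀ + (M₁ - M₂)) * S + S * (M₀ + (M₁ - M₂))ᵀ + C
          = (M₀ * S + S * M₀ᵀ + C) + ((M₁ - M₂) * S + S * (M₁ - M₂)ᵀ) := by
            rw [Matrix.transpose_add, Matrix.add_mul, Matrix.mul_add]; abel
        _ = 0 := by rw [hM₀eq, hD, add_zero]
    have stab₀ : IsStableMat M₀ := stable_of_lyap_aux hSpd hC hM₀eq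
    have stab₁ : IsStableMat (M₀ + (M₁ - M₂)) := stable_of_lyap_aux hSpd hC hM₁'
    have hsupp : InSupp E (M₀ + (M₁ - M₂)) := fun i j hij => by
      simp [Matrix.add_apply, Matrix.sub_apply, hM₀supp i j hij, h₁ i j hij, h₂ i j hij]
    have hkey := hGI M₀ (M₀ + (M₁ - M₂)) hM₀supp stab₀ hsupp stab₁ S hSpd hM₀eq hM₁'
    have : M₁ - M₂ = 0 := by
      have := congrArg (fun A => A - M₀) hkey
      simpa using this.symm
    exact sub_eq_zero.mp this
  · intro hinj M₁ M₂ h₁ hs₁ h₂ hs₂ S hSpd e₁ e₂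
    refine hinj S ⟨hSpd, M₁, h₁, e₁⟩ M₁ M₂ h₁ h₂ ?_
    have f₁ : M₁ * S + S * M₁ᵀ = -C := eq_neg_of_add_eq_zero_left e₁
    have f₂ : M₂ * S + S * M₂ᵀ = -C := eq_neg_of_add_eq_zero_left e₂
    rw [f₁, f₂]
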